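/- Let W, M̃, m be positive semidefinite d×d Hermitian matrices with W positive definite and 0 < m ≤ W. Then (W + M̃)⁻¹ − (W + M̃ + m)⁻¹ ≥ (1/2)(W + M̃)⁻¹ m (W + M̃)⁻¹ in the Loewner order. -/

import Mathlib

open scoped ComplexOrder Matrix
open Matrix


lemma half_psd {d : ℕ} {A : Matrix (Fin d) (Fin d) ℂ} (hA : A.PosSemidef) :
    ((1/2 : ℂ) • A).PosSemidef := by
  constructor
  · have := hA.1
    unfold Matrix.IsHermitian at *
    rw [conjTranspose_smul, this]
    norm_num
  · intro x
    have := hA.2 x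
    have h2 : (0:ℂ) ≤ (1/2 : ℂ) := by norm_num [Complex.le_def]
    exact (hA.smul h2).2 x

theorem stmt_6 {d : ℕ} (W M m : Matrix (Fin d) (Fin d) ℂ)
    (hW : W.PosDef) (hM : M.PosSemidef) (hm : m.PosDef)
    (hmW : (W - m).PosSemidef) :
    ((W + M)⁻¹ - (W + M + m)⁻¹ -
      (1 / 2 : ℂ) • ((W + M)⁻¹ * m * (W + M)⁻¹)).PosSemidef := by
  set A := W + M with hAdef
  set B := W + M + m with hBdef
  have hApd : A.PosDef := hW.add_posSemidef hM
  have hBpd : B.PosDef := hApd.add hm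
  have hAdet : IsUnit A.det := hApd.det_pos.ne'.isUnit
  have hBdet : IsUnit B.det := hBpd.det_pos.ne'.isUnit
  have hmdet : IsUnit m.det := hm.det_pos.ne'.isUnit
  have hBA : B = A + m := by rw [hBdef, hAdef]
  set D := A - m with hDdef
  have hDpsd : D.PosSemidef := by
    have : D = (W - m) + M := by rw [hDdef, hAdef]; abel
    rw [this]; exact hmW.add hM
  -- Y and its positivity
  set Y := (1/2 : ℂ) • (D * m⁻¹ * D) + D with hYdef
  have hYpsd : Y.PosSemidef := by
    have h1 : (D * m⁻¹ * D).PosSemidef := by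
      have := (hm.inv.posSemidef).conjTranspose_mul_mul_same (B := D)
      rwa [hDpsd.1.eq] at this
    exact (half_psd h1).add hDpsd
  -- Y in terms of B
  have hYB : Y = (1/2 : ℂ) • (B * m⁻¹ * B) - B := by
    rw [hYdef, hDdef, hBA]
    have c1 : m * m⁻¹ = 1 := mul_nonsing_inv m hmdet
    have c2 : m⁻¹ * m = 1 := nonsing_inv_mul m hmdet
    simp only [sub_mul, mul_sub, add_mul, mul_add, Matrix.mul_assoc, c2,
      Matrix.mul_one, Matrix.mul_nonsing_inv_cancel_left _ _ hmdet]
    module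
  -- resolvent identity
  have hres : A⁻¹ - B⁻¹ = A⁻¹ * m * B⁻¹ := by
    have : A⁻¹ * (B - A) * B⁻¹ = A⁻¹ - B⁻¹ := by
      rw [mul_sub, sub_mul, Matrix.mul_assoc, Matrix.mul_assoc,
        mul_nonsing_inv _ hBdet, Matrix.mul_one,
        Matrix.nonsing_inv_mul_cancel_left _ _ hAdet]
    rw [← this, hBA]
    simp
  -- key equality
  have heq : A⁻¹ - B⁻¹ - (1/2 : ℂ) • (A⁻¹ * m * A⁻¹) =
      (A⁻¹ * m * B⁻¹) * Y * (B⁻¹ * m * A⁻¹) := by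
    rw [hYB]
    have e1 : (A⁻¹ * m * B⁻¹) * ((1/2 : ℂ) • (B * m⁻¹ * B) - B) * (B⁻¹ * m * A⁻¹)
        = (1/2 : ℂ) • (A⁻¹ * m * A⁻¹) - A⁻¹ * m * B⁻¹ * m * A⁻¹ := by
      simp only [Matrix.mul_sub, Matrix.sub_mul, Matrix.mul_smul, Matrix.smul_mul,
        Matrix.mul_assoc, Matrix.nonsing_inv_mul_cancel_left _ _ hBdet,
        Matrix.mul_nonsing_inv_cancel_left _ _ hBdet,
        Matrix.nonsing_inv_mul_cancel_left _ _ hmdet,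
        Matrix.mul_nonsing_inv_cancel_left _ _ hmdet]
    rw [e1]
    have e2 : A⁻¹ * m * A⁻¹ = A⁻¹ - B⁻¹ + A⁻¹ * m * B⁻¹ * m * A⁻¹ := by
      have hres2 : A⁻¹ - B⁻¹ = B⁻¹ * m * A⁻¹ := by
        have : B⁻¹ * (B - A) * A⁻¹ = A⁻¹ - B⁻¹ := by
          rw [Matrix.mul_sub, Matrix.sub_mul, nonsing_inv_mul _ hBdet, Matrix.one_mul,
            Matrix.mul_assoc, mul_nonsing_inv _ hAdet, Matrix.mul_one]
        rw [← this, hBA]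
        simp
      rw [hres]
      have h3 : A⁻¹ * m * B⁻¹ * m * A⁻¹ = A⁻¹ * m * A⁻¹ - A⁻¹ * m * B⁻¹ := by
        calc A⁻¹ * m * B⁻¹ * m * A⁻¹ = A⁻¹ * m * (B⁻¹ * m * A⁻¹) := by
              simp only [Matrix.mul_assoc]
          _ = A⁻¹ * m * (A⁻¹ - B⁻¹) := by rw [← hres2]
          _ = A⁻¹ * m * A⁻¹ - A⁻¹ * m * B⁻¹ := by rw [Matrix.mul_sub]
      rw [h3]
      abel
    rw [e2]
    module
  -- conjTranspose form
  have hCT : (B⁻¹ * m * A⁻¹)ᴴ = A⁻¹ * m * B⁻¹ := by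
    simp only [conjTranspose_mul, Matrix.mul_assoc]
    rw [hApd.inv.1.eq, hBpd.inv.1.eq, hm.1.eq]
  have := hYpsd.conjTranspose_mul_mul_same (B := B⁻¹ * m * A⁻¹)
  rw [hCT] at this
  rwa [← heq] at this
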